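/- Let (Y, μ) be a measure space and let p₁, p₀ : Y → ℝ be measurable probability densities with respect to μ (nonnegative with ∫ pᵢ dμ = 1) that are strictly positive μ-almost everywhere. For a measurable discriminant F : Y → ℝ define the exponential risk R(F) = ½ ∫ e^{−F} p₁ dμ + ½ ∫ e^{F} p₀ dμ, corresponding to equiprobable classes. Then R(F) ≥ ∫ √(p₁ p₀) dμ for every F, and the log-likelihood-ratio discriminant F*(y) = ½ log(p₁(y)/p₀(y)) attains equality: R(F*) = ∫ √(p₁ p₀) dμ. Hence the minimal exponential risk equals the Bhattacharyya coefficient of the two class-conditional densities. -/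

import Mathlib

open MeasureTheory

lemma amgm_exp (t a b : ℝ) (ha : 0 ≤ a) (hb : 0 ≤ b) :
    Real.sqrt (a * b) ≤ 2⁻¹ * (Real.exp (-t) * a + Real.exp t * b) := by
  have h1 : 0 ≤ Real.exp (-t) * a := mul_nonneg (Real.exp_nonneg _) ha
  have h2 : 0 ≤ Real.exp t * b := mul_nonneg (Real.exp_nonneg _) hb
  have key : Real.sqrt (a * b) = Real.sqrt (Real.exp (-t) * a) * Real.sqrt (Real.exp t * b) := by
    rw [← Real.sqrt_mul h1]
    congr 1
    rw [show Real.exp (-t) * a * (Real.exp t * b) = (Real.exp (-t) * Real.exp t) * (a * b) by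
      ring, ← Real.exp_add]
    simp
  rw [key]
  nlinarith [sq_nonneg (Real.sqrt (Real.exp (-t) * a) - Real.sqrt (Real.exp t * b)),
    Real.sq_sqrt h1, Real.sq_sqrt h2]

lemma eq1 (a b : ℝ) (ha : 0 < a) (hb : 0 < b) :
    Real.exp (-((1 / 2) * Real.log (a / b))) * a = Real.sqrt (a * b) := by
  have h : Real.exp ((1 / 2) * Real.log (a / b)) = Real.sqrt (a / b) := by
    rw [Real.sqrt_eq_rpow, Real.rpow_def_of_pos (div_pos ha hb)]
    ring_nf
  rw [Real.exp_neg, h]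
  rw [show a = Real.sqrt (a * a) by rw [Real.sqrt_mul_self ha.le]]
  rw [← Real.sqrt_inv, ← Real.sqrt_mul (by positivity)]
  congr 1
  field_simp
  rw [Real.sq_sqrt (by positivity)]

lemma eq2 (a b : ℝ) (ha : 0 < a) (hb : 0 < b) :
    Real.exp ((1 / 2) * Real.log (a / b)) * b = Real.sqrt (a * b) := by
  have h : Real.exp ((1 / 2) * Real.log (a / b)) = Real.sqrt (a / b) := by
    rw [Real.sqrt_eq_rpow, Real.rpow_def_of_pos (div_pos ha hb)]
    ring_nf
  rw [h, show b = Real.sqrt (b * b) by rw [Real.sqrt_mul_self hb.le],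
    ← Real.sqrt_mul (by positivity)]
  congr 1
  field_simp
  rw [Real.sq_sqrt (by positivity)]

/-- For equiprobable classes with class-conditional densities `p₁, p₀`, every
measurable discriminant has exponential risk at least the Bhattacharyya coefficient,
and the log-likelihood-ratio discriminant attains it. -/
theorem stmt_9 {Y : Type*} [MeasurableSpace Y] (μ : Measure Y)
    (p₁ p₀ : Y → ℝ) (h₁m : Measurable p₁) (h₀m : Measurable p₀)
    (h₁nn : ∀ y, 0 ≤ p₁ y) (h₀nn : ∀ y, 0 ≤ p₀ y)
    (h₁pos : ∀ᵐ y ∂μ, 0 < p₁ y) (h₀pos : ∀ᵐ y ∂μ, 0 < p₀ y)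
    (h₁int : ∫⁻ y, ENNReal.ofReal (p₁ y) ∂μ = 1)
    (h₀int : ∫⁻ y, ENNReal.ofReal (p₀ y) ∂μ = 1) :
    (∀ F : Y → ℝ, Measurable F →
        (∫⁻ y, ENNReal.ofReal (Real.sqrt (p₁ y * p₀ y)) ∂μ) ≤
          (1 / 2) * (∫⁻ y, ENNReal.ofReal (Real.exp (-F y) * p₁ y) ∂μ) +
            (1 / 2) * ∫⁻ y, ENNReal.ofReal (Real.exp (F y) * p₀ y) ∂μ) ∧
    ((1 / 2) * (∫⁻ y, ENNReal.ofReal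
          (Real.exp (-((1 / 2) * Real.log (p₁ y / p₀ y))) * p₁ y) ∂μ) +
        (1 / 2) * (∫⁻ y, ENNReal.ofReal
          (Real.exp ((1 / 2) * Real.log (p₁ y / p₀ y)) * p₀ y) ∂μ) =
      ∫⁻ y, ENNReal.ofReal (Real.sqrt (p₁ y * p₀ y)) ∂μ) := by
  constructor
  · intro F hF
    have key : ∀ y, ENNReal.ofReal (Real.sqrt (p₁ y * p₀ y)) ≤
        (1/2) * (ENNReal.ofReal (Real.exp (-F y) * p₁ y)
          + ENNReal.ofReal (Real.exp (F y) * p₀ y)) := by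
      intro y
      have := amgm_exp (F y) (p₁ y) (p₀ y) (h₁nn y) (h₀nn y)
      calc ENNReal.ofReal (Real.sqrt (p₁ y * p₀ y))
          ≤ ENNReal.ofReal (2⁻¹ * (Real.exp (-F y) * p₁ y + Real.exp (F y) * p₀ y)) :=
            ENNReal.ofReal_le_ofReal this
        _ = (1/2) * (ENNReal.ofReal (Real.exp (-F y) * p₁ y)
              + ENNReal.ofReal (Real.exp (F y) * p₀ y)) := by
            rw [ENNReal.ofReal_mul (by norm_num),
              ENNReal.ofReal_add (mul_nonneg (Real.exp_nonneg _) (h₁nn y))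
                (mul_nonneg (Real.exp_nonneg _) (h₀nn y))]
            congr 1
            rw [ENNReal.ofReal_inv_of_pos (by norm_num)]
            norm_num
    calc (∫⁻ y, ENNReal.ofReal (Real.sqrt (p₁ y * p₀ y)) ∂μ)
        ≤ ∫⁻ y, (1/2) * (ENNReal.ofReal (Real.exp (-F y) * p₁ y)
            + ENNReal.ofReal (Real.exp (F y) * p₀ y)) ∂μ :=
          lintegral_mono key
      _ = (1/2) * ∫⁻ y, (ENNReal.ofReal (Real.exp (-F y) * p₁ y)
            + ENNReal.ofReal (Real.exp (F y) * p₀ y)) ∂μ := by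
          rw [lintegral_const_mul' _ _ (by norm_num)]
      _ = (1/2) * ((∫⁻ y, ENNReal.ofReal (Real.exp (-F y) * p₁ y) ∂μ)
            + ∫⁻ y, ENNReal.ofReal (Real.exp (F y) * p₀ y) ∂μ) := by
          rw [lintegral_add_left (by measurability)]
      _ = (1/2) * (∫⁻ y, ENNReal.ofReal (Real.exp (-F y) * p₁ y) ∂μ)
            + (1/2) * ∫⁻ y, ENNReal.ofReal (Real.exp (F y) * p₀ y) ∂μ := by
          rw [mul_add]
  · have hae : ∀ᵐ y ∂μ, 0 < p₁ y ∧ 0 < p₀ y := h₁pos.and h₀pos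
    have e1 : (∫⁻ y, ENNReal.ofReal
        (Real.exp (-((1 / 2) * Real.log (p₁ y / p₀ y))) * p₁ y) ∂μ)
        = ∫⁻ y, ENNReal.ofReal (Real.sqrt (p₁ y * p₀ y)) ∂μ := by
      exact lintegral_congr_ae (hae.mono fun y ⟨h1, h0⟩ =>
        congrArg ENNReal.ofReal (eq1 _ _ h1 h0))
    have e2 : (∫⁻ y, ENNReal.ofReal
        (Real.exp ((1 / 2) * Real.log (p₁ y / p₀ y)) * p₀ y) ∂μ)
        = ∫⁻ y, ENNReal.ofReal (Real.sqrt (p₁ y * p₀ y)) ∂μ := by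
      exact lintegral_congr_ae (hae.mono fun y ⟨h1, h0⟩ =>
        congrArg ENNReal.ofReal (eq2 _ _ h1 h0))
    rw [e1, e2, ← add_mul]
    norm_num [ENNReal.inv_two_add_inv_two]
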